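/- Let G be a multigraph and O an orientation of G. Then for every edge e of G, exactly one of the following holds: (i) there exists a subset S of the vertex set V such that e has exactly one endpoint in S and the cut of S is directed towards S; (ii) e is contained in a directed cycle of O. In particular, e is contained in a directed cut or in a directed cycle, but not both. -/

import Mathlib

open Finset

/-- A multigraph on vertex type `V` with edge type `E`: each edge `e` joins the
(possibly equal) vertices `fst e` and `snd e` (loops and multiple edges allowed). -/
structure Multigraph (V E : Type) where
  fst : E → V
  snd : E → V

/-- An orientation of a multigraph: each edge gets a tail and a head, which are its
two endpoints (in one of the two possible orders). -/
structure GraphOrientation {V E : Type} (G : Multigraph V E) where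
  tail : E → V
  head : E → V
  compat : ∀ e, (tail e = G.fst e ∧ head e = G.snd e) ∨ (tail e = G.snd e ∧ head e = G.fst e)

variable {V E : Type} [Fintype V] [Fintype E] [DecidableEq V] [DecidableEq E]

namespace Multigraph

/-- `E(S)`: the set of edges with both endpoints in `S`. -/
def edgesIn (G : Multigraph V E) (S : Finset V) : Finset E :=
  univ.filter fun e => G.fst e ∈ S ∧ G.snd e ∈ S

/-- Membership in the cut of `S`: exactly one endpoint of `e` lies in `S`. -/
def InCut (G : Multigraph V E) (S : Finset V) (e : E) : Prop :=
  (G.fst e ∈ S ∧ G.snd e ∉ S) ∨ (G.fst e ∉ S ∧ G.snd e ∈ S)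

instance (G : Multigraph V E) (S : Finset V) : DecidablePred (G.InCut S) := fun e =>
  decidable_of_iff ((G.fst e ∈ S ∧ G.snd e ∉ S) ∨ (G.fst e ∉ S ∧ G.snd e ∈ S)) Iff.rfl

/-- `ε(S)`: the number of edges with exactly one endpoint in `S`. -/
def cutCard (G : Multigraph V E) (S : Finset V) : ℕ :=
  (univ.filter fun e => G.InCut S e).card

/-- The genus `g(S) = |E(S)| - |S| + 1 + Σ_{v ∈ S} g_v` of a subset of vertices,
for the vertex weight function `w`. -/
def genusOf (G : Multigraph V E) (w : V → ℕ) (S : Finset V) : ℤ :=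
  ((G.edgesIn S).card : ℤ) - S.card + 1 + ∑ v ∈ S, (w v : ℤ)

/-- The genus of the weighted multigraph. -/
def genus (G : Multigraph V E) (w : V → ℕ) : ℤ := G.genusOf w univ

/-- The valence of a vertex: the number of edge-ends at it (a loop counts twice). -/
def valence (G : Multigraph V E) (v : V) : ℕ :=
  (univ.filter fun e => G.fst e = v).card + (univ.filter fun e => G.snd e = v).card

/-- Adjacency via some edge. -/
def Adj (G : Multigraph V E) (a b : V) : Prop :=
  ∃ e, (G.fst e = a ∧ G.snd e = b) ∨ (G.fst e = b ∧ G.snd e = a)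

/-- The multigraph is connected: nonempty, and any two vertices are joined by a path. -/
def Connected (G : Multigraph V E) : Prop :=
  Nonempty V ∧ ∀ a b : V, Relation.ReflTransGen G.Adj a b

/-- Adjacency inside the induced subgraph on `S` (via an edge of `E(S)`). -/
def AdjOn (G : Multigraph V E) (S : Finset V) (a b : V) : Prop :=
  ∃ e, ((G.fst e = a ∧ G.snd e = b) ∨ (G.fst e = b ∧ G.snd e = a)) ∧
    G.fst e ∈ S ∧ G.snd e ∈ S

/-- The induced subgraph on `S` is connected. -/
def ConnectedOn (G : Multigraph V E) (S : Finset V) : Prop :=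
  ∀ a ∈ S, ∀ b ∈ S, Relation.ReflTransGen (G.AdjOn S) a b

/-- The weighted multigraph is stable: connected, of genus at least 2, and every
vertex of weight 0 has valence at least 3. -/
def IsStable (G : Multigraph V E) (w : V → ℕ) : Prop :=
  G.Connected ∧ 2 ≤ G.genus w ∧ ∀ v, w v = 0 → 3 ≤ G.valence v

/-- A multidegree `d : V → ℤ` of total degree `δ = ∑ v, d v` is semistable if for every
nonempty `S ⊆ V`:
`(2g-2)(g(S)-1) + (δ-g+1)(2g(S)-2+ε(S)) ≤ (2g-2) Σ_{v ∈ S} d v`. -/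
def Semistable (G : Multigraph V E) (w : V → ℕ) (d : V → ℤ) : Prop :=
  ∀ S : Finset V, S.Nonempty →
    (2 * G.genus w - 2) * (G.genusOf w S - 1) +
      ((∑ v, d v) - G.genus w + 1) * (2 * G.genusOf w S - 2 + (G.cutCard S : ℤ)) ≤
    (2 * G.genus w - 2) * ∑ v ∈ S, d v

/-- A multidegree is stable if it is semistable and the semistability inequality is
strict for every nonempty proper subset of vertices. -/
def StableDeg (G : Multigraph V E) (w : V → ℕ) (d : V → ℤ) : Prop :=
  G.Semistable w d ∧ ∀ S : Finset V, S.Nonempty → S ≠ univ →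
    (2 * G.genus w - 2) * (G.genusOf w S - 1) +
      ((∑ v, d v) - G.genus w + 1) * (2 * G.genusOf w S - 2 + (G.cutCard S : ℤ)) <
    (2 * G.genus w - 2) * ∑ v ∈ S, d v

/-- A multidegree is effective if it is nonnegative at every vertex. -/
def Effective (d : V → ℤ) : Prop := ∀ v, 0 ≤ d v

end Multigraph

namespace GraphOrientation

variable {G : Multigraph V E}

/-- The indegree of a vertex: the number of edges with head `v`. -/
def indeg (O : GraphOrientation G) (v : V) : ℕ :=
  (univ.filter fun e => O.head e = v).card

/-- The multidegree `d_O` associated to an orientation: `d_O(v) = g_v - 1 + indeg_O(v)`. -/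
def multidegree (O : GraphOrientation G) (w : V → ℕ) : V → ℤ :=
  fun v => (w v : ℤ) - 1 + (O.indeg v : ℤ)

/-- The edge `e₀` lies on a directed cycle of `O`: there are `k ≥ 1` distinct vertices
`vs` and distinct edges `es`, with `es i` directed from `vs i` to `vs (i+1)`,
one of the edges being `e₀`. -/
def EdgeInCycle (O : GraphOrientation G) (e₀ : E) : Prop :=
  ∃ (k : ℕ) (vs : Fin (k + 1) → V) (es : Fin (k + 1) → E),
    Function.Injective vs ∧ Function.Injective es ∧ (∃ i, es i = e₀) ∧
    ∀ i, O.tail (es i) = vs i ∧ O.head (es i) = vs (i + 1)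

/-- The orientation contains a directed cycle. -/
def HasDirectedCycle (O : GraphOrientation G) : Prop :=
  ∃ (k : ℕ) (vs : Fin (k + 1) → V) (es : Fin (k + 1) → E),
    Function.Injective vs ∧ Function.Injective es ∧
    ∀ i, O.tail (es i) = vs i ∧ O.head (es i) = vs (i + 1)

/-- The orientation is acyclic: it contains no directed cycle. -/
def Acyclic (O : GraphOrientation G) : Prop := ¬ O.HasDirectedCycle

/-- The orientation is totally cyclic: every edge lies on a directed cycle. -/
def TotallyCyclic (O : GraphOrientation G) : Prop := ∀ e, O.EdgeInCycle e

/-- The cut of `S` is directed towards `S`: every edge of the cut has its head in `S`. -/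
def CutTowards (O : GraphOrientation G) (S : Finset V) : Prop :=
  ∀ e, G.InCut S e → O.head e ∈ S

/-- The cut of `S` is directed away from `S`: every edge of the cut has its tail in `S`. -/
def CutAway (O : GraphOrientation G) (S : Finset V) : Prop :=
  ∀ e, G.InCut S e → O.tail e ∈ S

end GraphOrientation


section Aux

variable {G : Multigraph V E}

/-- One directed step of an orientation. -/
def OStep (O : GraphOrientation G) (x y : V) : Prop :=
  ∃ e, O.tail e = x ∧ O.head e = y

lemma incut_iff_tail_head (O : GraphOrientation G) (S : Finset V) (e : E) :
    G.InCut S e ↔ ((O.tail e ∈ S ∧ O.head e ∉ S) ∨ (O.tail e ∉ S ∧ O.head e ∈ S)) := by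
  rcases O.compat e with ⟨h1, h2⟩ | ⟨h1, h2⟩ <;> rw [h1, h2] <;> unfold Multigraph.InCut <;> tauto

open Fin.NatCast Fin.CommRing in
/-- An edge cannot lie both in a directed cut and on a directed cycle. -/
lemma not_cut_and_cycle (O : GraphOrientation G) {S : Finset V} {e : E}
    (hcut : G.InCut S e) (htow : O.CutTowards S) (hcyc : O.EdgeInCycle e) : False := by
  obtain ⟨k, vs, es, hvinj, heinj, ⟨j, hje⟩, hdir⟩ := hcyc
  have hhead : O.head e ∈ S := htow e hcut
  have htail : O.tail e ∉ S := by
    rcases (incut_iff_tail_head O S e).1 hcut with ⟨h1, h2⟩ | ⟨h1, h2⟩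
    · exact absurd hhead h2
    · exact h1
  have key : ∀ m : ℕ, vs (j + 1 + (m : Fin (k + 1))) ∈ S := by
    intro m
    induction m with
    | zero =>
      have h2 := (hdir j).2
      rw [hje] at h2
      rw [Nat.cast_zero, add_zero, ← h2]
      exact hhead
    | succ m ih =>
      set i := j + 1 + (m : Fin (k + 1)) with hi
      have hnext : vs (i + 1) ∈ S := by
        by_contra hno
        have hc : G.InCut S (es i) := by
          rw [incut_iff_tail_head O]
          left
          rw [(hdir i).1, (hdir i).2]
          exact ⟨ih, hno⟩
        have h3 := htow _ hc
        rw [(hdir i).2] at h3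
        exact hno h3
      have hcast : (((m + 1 : ℕ) : Fin (k + 1))) = (m : Fin (k + 1)) + 1 := by
        push_cast; ring
      rw [hcast, ← add_assoc]
      exact hnext
  have h0 : ((k : ℕ) : Fin (k + 1)) + 1 = 0 := by
    have h1 := Fin.natCast_self (k + 1)
    push_cast at h1
    linear_combination h1
  have hk : j + 1 + ((k : ℕ) : Fin (k + 1)) = j := by
    calc j + 1 + ((k : ℕ) : Fin (k + 1)) = j + (((k : ℕ) : Fin (k + 1)) + 1) := by ring
      _ = j := by rw [h0, add_zero]
  have h4 := key k
  rw [hk] at h4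
  have h5 : O.tail e ∈ S := by
    rw [← hje, (hdir j).1]
    exact h4
  exact htail h5

/-- From reachability we can extract a directed path with distinct vertices. -/
lemma exists_simple_path (O : GraphOrientation G) {a b : V}
    (h : Relation.ReflTransGen (OStep O) a b) :
    ∃ (n : ℕ) (vs : Fin (n + 1) → V) (es : Fin n → E),
      vs 0 = a ∧ vs (Fin.last n) = b ∧ Function.Injective vs ∧
      ∀ i : Fin n, O.tail (es i) = vs i.castSucc ∧ O.head (es i) = vs i.succ := by
  induction h using Relation.ReflTransGen.head_induction_on with
  | refl =>
    exact ⟨0, fun _ => b, Fin.elim0, rfl, rfl, fun x y _ => Fin.ext (by omega),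
      fun i => i.elim0⟩
  | head h' _ ih =>
    rename_i a c _
    obtain ⟨e, hte, hhe⟩ := h'
    obtain ⟨n, vs, es, h0, hl, hinj, hes⟩ := ih
    by_cases ha : ∃ i, vs i = a
    · obtain ⟨i, hi⟩ := ha
      refine ⟨n - i, fun j => vs ⟨i + j, by omega⟩, fun j => es ⟨(i : ℕ) + j, by omega⟩,
        ?_, ?_, ?_, ?_⟩
      · simpa using hi
      · rw [← hl]
        apply congrArg
        apply Fin.ext
        simp [Fin.last]
        omega
      · intro j₁ j₂ hj
        have h2 := congrArg Fin.val (hinj hj)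
        simp only [] at h2
        exact Fin.ext (by omega)
      · intro j
        constructor
        · rw [(hes _).1]
          apply congrArg
          apply Fin.ext
          simp
        · rw [(hes _).2]
          apply congrArg
          apply Fin.ext
          simp
          omega
    · push_neg at ha
      refine ⟨n + 1, Fin.cons a vs, Fin.cons e es, Fin.cons_zero _ _, ?_, ?_, ?_⟩
      · rw [← Fin.succ_last, Fin.cons_succ]
        exact hl
      · rw [Fin.cons_injective_iff]
        exact ⟨by rintro ⟨i, hi⟩; exact ha i hi, hinj⟩
      · intro i
        induction i using Fin.cases with
        | zero =>
          refine ⟨?_, ?_⟩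
          · simpa using hte
          · have h1 : (0 : Fin (n + 1)).succ = Fin.succ (0 : Fin (n + 1)) := rfl
            rw [Fin.cons_zero, h1, Fin.cons_succ, h0]
            exact hhe
        | succ j =>
          refine ⟨?_, ?_⟩
          · rw [Fin.cons_succ, ← Fin.succ_castSucc, Fin.cons_succ]
            exact (hes j).1
          · rw [Fin.cons_succ, Fin.cons_succ]
            exact (hes j).2

/-- If the head of `e` reaches the tail of `e`, then `e` lies on a directed cycle. -/
lemma edgeInCycle_of_reach (O : GraphOrientation G) (e : E)
    (h : Relation.ReflTransGen (OStep O) (O.head e) (O.tail e)) : O.EdgeInCycle e := by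
  obtain ⟨n, vs, es, h0, hl, hinj, hes⟩ := exists_simple_path O h
  have htl : ∀ i : Fin (n + 1), O.tail (if hi : (i : ℕ) < n then es ⟨i, hi⟩ else e) = vs i := by
    intro i
    split_ifs with hi
    · rw [(hes _).1]
      apply congrArg
      apply Fin.ext
      simp
    · have h1 : i = Fin.last n := by
        apply Fin.ext
        rw [Fin.val_last]
        have := i.isLt
        omega
      rw [h1, hl]
  refine ⟨n, vs, fun i => if hi : (i : ℕ) < n then es ⟨i, hi⟩ else e, hinj, ?_, ?_, ?_⟩
  · intro i j hij
    apply hinj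
    rw [← htl i, ← htl j]
    simp only [hij]
  · exact ⟨Fin.last n, by simp⟩
  · intro i
    refine ⟨htl i, ?_⟩
    by_cases hi : (i : ℕ) < n
    · simp only [dif_pos hi]
      rw [(hes _).2]
      apply congrArg
      apply Fin.ext
      rw [Fin.val_succ, Fin.val_add_one_of_lt (by rwa [Fin.lt_iff_val_lt_val, Fin.val_last])]
    · simp only [dif_neg hi]
      have hil : i = Fin.last n := by
        apply Fin.ext
        rw [Fin.val_last]
        have := i.isLt
        omega
      have h2 : i + 1 = 0 := by rw [hil]; exact Fin.last_add_one n
      rw [h2, h0]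

end Aux

/-- For every edge `e` of an oriented multigraph, exactly one of the
following holds: (i) there is a vertex subset `S` such that `e` lies in the cut of `S`
and the cut of `S` is directed towards `S`; (ii) `e` lies on a directed cycle. -/
theorem edge_in_directed_cut_xor_directed_cycle
    (G : Multigraph V E) (O : GraphOrientation G) (e : E) :
    Xor' (∃ S : Finset V, G.InCut S e ∧ O.CutTowards S) (O.EdgeInCycle e) := by
  classical
  by_cases hcyc : O.EdgeInCycle e
  · refine Or.inr ⟨hcyc, ?_⟩
    rintro ⟨S, hc, ht⟩
    exact not_cut_and_cycle O hc ht hcyc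
  · refine Or.inl ⟨⟨univ.filter fun v => Relation.ReflTransGen (OStep O) (O.head e) v, ?_, ?_⟩, hcyc⟩
    · rw [incut_iff_tail_head O]
      right
      constructor
      · simp only [mem_filter, mem_univ, true_and]
        intro hr
        exact hcyc (edgeInCycle_of_reach O e hr)
      · simp only [mem_filter, mem_univ, true_and]
        exact Relation.ReflTransGen.refl
    · intro e' he'
      rcases (incut_iff_tail_head O _ e').1 he' with ⟨h1, h2⟩ | ⟨h1, h2⟩
      · exfalso
        apply h2
        simp only [mem_filter, mem_univ, true_and] at h1 ⊢
        exact h1.tail ⟨e', rfl, rfl⟩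
      · exact h2
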